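/- Let 0 < ℓ < L, α = 4/(√L+√ℓ)², √β = α(L-ℓ)/4, and ℓ < λ < L with eigenvalues z^± = a ± ib (b ≠ 0) of T = [[1+β-αλ, -β],[1,0]]. Then ‖C‖_F² = 2β + 2 ≤ 4 where C = [[a+ib, a-ib],[1,1]], and ‖C⁻¹‖_F² = 2(1+β)/(4β - (1+β-αλ)²) ≤ 4/(α²(λ-ℓ)(L-λ)). -/

import Mathlib

open Complex Polynomial

/-- Squared Frobenius norm of a 2×2 complex matrix. -/
noncomputable def frobSq (M : Matrix (Fin 2) (Fin 2) ℂ) : ℝ :=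
  ∑ i, ∑ j, ‖M i j‖ ^ 2

set_option maxHeartbeats 1600000 in
theorem hbm_eigvec_matrix_frobenius_bounds
    (L ℓ α β lam a b : ℝ) (hℓ : 0 < ℓ) (hℓL : ℓ < L)
    (hα : α = 4 / (Real.sqrt L + Real.sqrt ℓ) ^ 2)
    (hβ : Real.sqrt β = α * (L - ℓ) / 4) (hβ0 : 0 ≤ β)
    (h1 : ℓ < lam) (h2 : lam < L) (hb : b ≠ 0)
    (T C : Matrix (Fin 2) (Fin 2) ℂ)
    (hT : T = !![((1 + β - α * lam : ℝ) : ℂ), ((-β : ℝ) : ℂ); 1, 0])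
    (hrootP : T.charpoly.IsRoot ((a : ℂ) + b * I))
    (hrootM : T.charpoly.IsRoot ((a : ℂ) - b * I))
    (hC : C = !![(a : ℂ) + b * I, (a : ℂ) - b * I; 1, 1]) :
    frobSq C = 2 * β + 2 ∧ 2 * β + 2 ≤ 4 ∧
    frobSq C⁻¹ = 2 * (1 + β) / (4 * β - (1 + β - α * lam) ^ 2) ∧
    frobSq C⁻¹ ≤ 4 / (α ^ 2 * (lam - ℓ) * (L - lam)) := by
  have hL0 : (0:ℝ) < L := hℓ.trans hℓL
  have hsl0 : 0 < Real.sqrt ℓ := Real.sqrt_pos.2 hℓ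
  have hsL0 : 0 < Real.sqrt L := Real.sqrt_pos.2 hL0
  have hsL2 : Real.sqrt L ^ 2 = L := Real.sq_sqrt hL0.le
  have hsl2 : Real.sqrt ℓ ^ 2 = ℓ := Real.sq_sqrt hℓ.le
  have hsum : Real.sqrt L + Real.sqrt ℓ ≠ 0 := by positivity
  have hβval : β = (α * (L - ℓ) / 4) ^ 2 := by rw [← hβ, Real.sq_sqrt hβ0]
  -- charpoly
  have hchar : T.charpoly = X^2 - Polynomial.C (((1 + β - α * lam : ℝ)) : ℂ) * X
      + Polynomial.C ((β : ℝ) : ℂ) := by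
    subst hT
    rw [Matrix.charpoly, Matrix.det_fin_two, Matrix.charmatrix_apply_eq,
      Matrix.charmatrix_apply_eq, Matrix.charmatrix_apply_ne _ _ _ (by decide),
      Matrix.charmatrix_apply_ne _ _ _ (by decide)]
    simp
    ring
  have key : ((a:ℂ) + b * I)^2 - ((1 + β - α * lam : ℝ):ℂ) * ((a:ℂ) + b * I)
      + ((β:ℝ):ℂ) = 0 := by
    have := hrootP
    rw [Polynomial.IsRoot, hchar] at this
    simpa using this
  rw [Complex.ext_iff] at key
  obtain ⟨kre, kim⟩ := key
  simp [pow_two, Complex.add_re, Complex.add_im, Complex.mul_re, Complex.mul_im] at kre kim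
  -- kim should give: 2ab - s b = 0 ; kre: a² - b² - s a + β = 0
  have hs : 1 + β - α * lam = 2 * a := by
    have h0 : b * (2 * a - (1 + β - α * lam)) = 0 := by linear_combination kim
    rcases mul_eq_zero.1 h0 with h | h
    · exact absurd h hb
    · linarith
  have hβab : a ^ 2 + b ^ 2 = β := by linear_combination -kre - a * hs
  -- β ≤ 1
  have hα0 : 0 < α := by rw [hα]; positivity
  have hβ1 : β ≤ 1 := by
    have h4 : α * (Real.sqrt L + Real.sqrt ℓ) ^ 2 = 4 := by
      rw [hα]; field_simp
    have hu : α * (L - ℓ) / 4 ≤ 1 := by nlinarith [hsl0, hsL0, hsL2, hsl2, hα0]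
    have hLl : (0:ℝ) < L - ℓ := by linarith
    have hu0 : 0 ≤ α * (L - ℓ) / 4 := by positivity
    calc β = (α * (L - ℓ) / 4) ^ 2 := hβval
    _ ≤ 1 := by nlinarith
  -- frobenius of C
  have habs : ∀ x y : ℝ, ‖(x:ℂ) + (y:ℂ) * I‖ ^ 2 = x ^ 2 + y ^ 2 := by
    intro x y
    rw [Complex.sq_norm]
    simp [Complex.normSq_apply]
    ring
  have hfC : frobSq C = 2 * β + 2 := by
    have e1 : (a:ℂ) - b * I = (a:ℂ) + ((-b : ℝ):ℂ) * I := by push_cast; ring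
    rw [frobSq, hC]
    simp [Fin.sum_univ_two, Complex.sq_norm, Complex.normSq_apply]
    nlinarith [hβab]
  -- inverse
  have hdet : C.det = 2 * (b:ℂ) * I := by
    rw [hC, Matrix.det_fin_two_of]; ring
  have hbC : (b:ℂ) ≠ 0 := by exact_mod_cast hb
  have hdet0 : C.det ≠ 0 := by rw [hdet]; simp [hbC, Complex.I_ne_zero]
  have hCinv : C⁻¹ = (2 * (b:ℂ) * I)⁻¹ • !![(1:ℂ), -((a:ℂ) - b * I); -1, (a:ℂ) + b * I] := by
    rw [Matrix.inv_def, hdet, Ring.inverse_eq_inv', hC, Matrix.adjugate_fin_two_of]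
  have hb2 : (0:ℝ) < b ^ 2 := by positivity
  have hfCi : frobSq C⁻¹ = (2 * β + 2) / (4 * b ^ 2) := by
    rw [frobSq, hCinv]
    have e2 : ‖(b:ℂ) * Complex.I - (a:ℂ)‖ ^ 2 = a ^ 2 + b ^ 2 := by
      rw [Complex.sq_norm]; simp [Complex.normSq_apply]; ring
    have e3 : ‖(a:ℂ) + (b:ℂ) * Complex.I‖ ^ 2 = a ^ 2 + b ^ 2 := by
      rw [Complex.sq_norm]; simp [Complex.normSq_apply]; ring
    simp [Fin.sum_univ_two, Complex.sq_norm, Complex.normSq_apply, Matrix.smul_apply,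
      Complex.normSq_mul, Complex.normSq_inv]
    simp only [mul_pow, inv_pow, sq_abs, e2, e3]
    have hb0' : (b:ℝ) ^ 2 ≠ 0 := ne_of_gt hb2
    field_simp
    nlinarith [hβab, hb2]
  have hid : 4 * β - (1 + β - α * lam) ^ 2 = α ^ 2 * (lam - ℓ) * (L - lam) := by
    rw [hβval, hα]
    generalize hg1 : Real.sqrt L = sL at hsL2 hsL0 ⊢
    generalize hg2 : Real.sqrt ℓ = sl at hsl2 hsl0 ⊢
    rw [← hsL2, ← hsl2]
    have hne : sL + sl ≠ 0 := by positivity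
    field_simp
    ring
  have h4b : 4 * β - (1 + β - α * lam) ^ 2 = 4 * b ^ 2 := by
    rw [hs]; linear_combination -4 * hβab
  have hpos : 0 < α ^ 2 * (lam - ℓ) * (L - lam) :=
    mul_pos (mul_pos (pow_pos hα0 2) (by linarith)) (by linarith)
  refine ⟨hfC, by linarith, ?_, ?_⟩
  · rw [hfCi, h4b]; ring
  · have heq : frobSq C⁻¹ = (2 * β + 2) / (α ^ 2 * (lam - ℓ) * (L - lam)) := by
      rw [hfCi, ← h4b, hid]
    rw [heq]
    exact (div_le_div_iff_of_pos_right hpos).2 (by linarith)
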